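/- Let S ⊆ {1,…,p} be nonempty, let θ*_S ∈ ℝ^{|S|}, and suppose F = F_{n,θ*_S} is positive definite. For R > 0 let Θ_S(R) = {θ_S ∈ ℝ^{|S|} : ‖F^{1/2}(θ_S − θ*_S)‖₂ ≤ R}, ζ = max_{1≤i≤n} ‖F^{−1/2}x_{i,S}‖₂, and δ̄ = (sup_{θ_S ∈ Θ_S(R)} max_{1≤i≤n} exp(3·|x_{i,S}ᵀ(θ_S − θ*_S)|))·ζ·R. Then for every θ_S ∈ Θ_S(R): (1 − δ̄)·F ⪯ F_{n,θ_S} ⪯ (1 + δ̄)·F in the Loewner order (i.e., the differences are positive semidefinite). -/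

import Mathlib

open Matrix Real

lemma aux_psd {ι κ : Type*} [Fintype ι] [Fintype κ] (a : ι → ℝ) (ha : ∀ i, 0 ≤ a i)
    (x : ι → κ → ℝ) (M : Matrix κ κ ℝ) (hM : ∀ j k, M j k = ∑ i, a i * x i j * x i k) :
    M.PosSemidef := by
  rw [posSemidef_iff_dotProduct_mulVec]
  constructor
  · ext j k
    simp only [conjTranspose_apply, star_trivial, hM]
    exact Finset.sum_congr rfl fun i _ => by ring
  · intro v
    have key : star v ⬝ᵥ M *ᵥ v = ∑ i, a i * (∑ j, x i j * v j) ^ 2 := by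
      simp only [star_trivial, dotProduct, mulVec, dotProduct, hM]
      calc ∑ j, v j * ∑ k, (∑ i, a i * x i j * x i k) * v k
          = ∑ j, ∑ k, ∑ i, a i * (x i j * v j) * (x i k * v k) := by
            refine Finset.sum_congr rfl fun j _ => ?_
            simp only [Finset.mul_sum, Finset.sum_mul]
            refine Finset.sum_congr rfl fun k _ => Finset.sum_congr rfl fun i _ => by ring
        _ = ∑ i, ∑ j, ∑ k, a i * (x i j * v j) * (x i k * v k) := by
            rw [show (∑ j, ∑ k, ∑ i, a i * (x i j * v j) * (x i k * v k))
                = ∑ j, ∑ i, ∑ k, a i * (x i j * v j) * (x i k * v k) from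
              Finset.sum_congr rfl fun j _ => Finset.sum_comm]
            exact Finset.sum_comm
        _ = ∑ i, a i * (∑ j, x i j * v j) ^ 2 := by
            refine Finset.sum_congr rfl fun i _ => ?_
            rw [sq]
            simp only [Finset.mul_sum, Finset.sum_mul]
            exact Finset.sum_congr rfl fun j _ => Finset.sum_congr rfl fun k _ => by ring
    rw [key]
    exact Finset.sum_nonneg fun i _ => mul_nonneg (ha i) (sq_nonneg _)

lemma aux_symm {κ : Type*} [Fintype κ] (M : Matrix κ κ ℝ) (hM : M.IsHermitian)
    (a c : κ → ℝ) : a ⬝ᵥ M *ᵥ c = c ⬝ᵥ M *ᵥ a := by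
  have ht : Mᵀ = M := by
    ext j k
    simpa [conjTranspose_apply] using congrFun (congrFun hM j) k
  rw [dotProduct_mulVec, dotProduct_comm, ← ht, mulVec_transpose, ht]

lemma aux_cs {κ : Type*} [Fintype κ] (M : Matrix κ κ ℝ) (hM : M.PosSemidef) (u v : κ → ℝ) :
    (u ⬝ᵥ M *ᵥ v) ^ 2 ≤ (u ⬝ᵥ M *ᵥ u) * (v ⬝ᵥ M *ᵥ v) := by
  have key : ∀ t : ℝ, 0 ≤ (v ⬝ᵥ M *ᵥ v) * (t*t) + (2 * (u ⬝ᵥ M *ᵥ v)) * t + (u ⬝ᵥ M *ᵥ u) := by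
    intro t
    have h0 := hM.dotProduct_mulVec_nonneg (u + t • v)
    simp only [star_trivial, add_dotProduct, mulVec_add, mulVec_smul, dotProduct_add,
      smul_dotProduct, dotProduct_smul, smul_eq_mul] at h0
    rw [aux_symm M hM.1 v u] at h0
    nlinarith
  have := discrim_le_zero key
  simp only [discrim] at this
  nlinarith

lemma aux_mvt (b : ℝ → ℝ) (hb3 : ContDiff ℝ 3 b)
    (hbpos : ∀ η, 0 < deriv (deriv b) η)
    (hb3bound : ∀ η, |deriv (deriv (deriv b)) η| ≤ deriv (deriv b) η)
    (hbratio : ∀ η₁ η₂, deriv (deriv b) η₁ ≤ Real.exp (3 * |η₁ - η₂|) * deriv (deriv b) η₂)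
    (η Δ : ℝ) :
    |deriv (deriv b) (η + Δ) - deriv (deriv b) η|
      ≤ |Δ| * Real.exp (3 * |Δ|) * deriv (deriv b) η := by
  set g := deriv (deriv b) with hgdef
  have hg : Differentiable ℝ g := by
    have h2 : ContDiff ℝ 1 (deriv^[2] b) := by
      apply ContDiff.iterate_deriv' 1 2
      exact_mod_cast hb3
    have : deriv^[2] b = g := rfl
    rw [this] at h2
    exact h2.differentiable (by norm_num)
  have bound : ∀ y ∈ Set.uIcc η (η + Δ), ‖deriv g y‖ ≤ Real.exp (3 * |Δ|) * g η := by
    intro y hy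
    have hyd : |y - η| ≤ |Δ| := by
      rcases Set.mem_uIcc.mp hy with ⟨h1, h2⟩ | ⟨h1, h2⟩ <;>
        refine abs_le.mpr ⟨?_, ?_⟩ <;> linarith [le_abs_self Δ, neg_abs_le Δ]
    calc ‖deriv g y‖ = |deriv (deriv (deriv b)) y| := by rw [Real.norm_eq_abs, hgdef]
      _ ≤ g y := hb3bound y
      _ ≤ Real.exp (3 * |y - η|) * g η := hbratio y η
      _ ≤ Real.exp (3 * |Δ|) * g η := by
          exact mul_le_mul_of_nonneg_right (Real.exp_le_exp.mpr (by linarith)) (hbpos η).le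
  have key := (convex_uIcc η (η + Δ)).norm_image_sub_le_of_norm_deriv_le
    (fun y _ => hg y) bound Set.left_mem_uIcc Set.right_mem_uIcc
  rw [Real.norm_eq_abs, Real.norm_eq_abs, add_sub_cancel_left] at key
  nlinarith [key]

/-- smoothness of the Fisher information operator.  The Fisher matrix at
`θs` is `F θs`; `Θ_S(R)` is encoded by the quadratic-form condition
`(θs - θ*) ⬝ᵥ F(θ*)·(θs - θ*) ≤ R²` (which is exactly `‖F(θ*)^{1/2}(θs - θ*)‖₂² ≤ R²`), and
`ζ = max_i ‖F(θ*)^{-1/2} x_{i,S}‖₂` is encoded via `ζ = max_i √(x_{i,S}ᵀ F(θ*)⁻¹ x_{i,S})`. -/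
theorem stmt_3
    (n p : ℕ) (hn : 1 ≤ n)
    (x : Fin n → Fin p → ℝ)
    -- the cumulant function: three times differentiable, `b'' > 0`, `|b'''| ≤ b''`,
    -- and `b''(η₁) ≤ exp (3|η₁ - η₂|) b''(η₂)`
    (b : ℝ → ℝ) (hb3 : ContDiff ℝ 3 b)
    (hbpos : ∀ η, 0 < deriv (deriv b) η)
    (hb3bound : ∀ η, |deriv (deriv (deriv b)) η| ≤ deriv (deriv b) η)
    (hbratio : ∀ η₁ η₂, deriv (deriv b) η₁ ≤ Real.exp (3 * |η₁ - η₂|) * deriv (deriv b) η₂)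
    -- the model `S` and `θ* = θ*_S`
    (S : Finset (Fin p)) (hS : S.Nonempty)
    (θstar : S → ℝ)
    -- the Fisher matrices
    (F : (S → ℝ) → Matrix S S ℝ)
    (hFdef : ∀ (θs : S → ℝ) (j k : S),
      F θs j k = ∑ i, deriv (deriv b) (∑ l : S, x i l.1 * θs l) * x i j.1 * x i k.1)
    (hFpd : (F θstar).PosDef)
    (R ζ δ : ℝ) (hR : 0 < R)
    (hζ : ζ = ⨆ i : Fin n,
      Real.sqrt ((fun l : S => x i l.1) ⬝ᵥ (F θstar)⁻¹.mulVec fun l : S => x i l.1))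
    (hδ : δ = (⨆ θs : {v : S → ℝ //
          (fun j => v j - θstar j) ⬝ᵥ (F θstar).mulVec (fun j => v j - θstar j) ≤ R ^ 2},
        ⨆ i : Fin n, Real.exp (3 * |∑ l : S, x i l.1 * (θs.1 l - θstar l)|)) * ζ * R) :
    ∀ θs : S → ℝ,
      (fun j => θs j - θstar j) ⬝ᵥ (F θstar).mulVec (fun j => θs j - θstar j) ≤ R ^ 2 →
      (F θs - (1 - δ) • F θstar).PosSemidef ∧ ((1 + δ) • F θstar - F θs).PosSemidef := by
  intro θs hθ
  haveI : Nonempty (Fin n) := ⟨⟨0, hn⟩⟩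
  set g := deriv (deriv b) with hgdef
  set F0 := F θstar with hF0
  -- F0 is invertible
  have hdet : IsUnit F0.det := isUnit_iff_ne_zero.mpr (ne_of_gt hFpd.det_pos)
  have hinv : (F0)⁻¹.PosSemidef := hFpd.inv.posSemidef
  -- Cauchy-Schwarz step
  have hCS : ∀ (θ' : S → ℝ),
      (fun j => θ' j - θstar j) ⬝ᵥ F0 *ᵥ (fun j => θ' j - θstar j) ≤ R ^ 2 → ∀ i : Fin n,
      |∑ l : S, x i l.1 * (θ' l - θstar l)|
        ≤ Real.sqrt ((fun l : S => x i l.1) ⬝ᵥ (F0)⁻¹ *ᵥ (fun l : S => x i l.1)) * R := by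
    intro θ' hθ' i
    set w : S → ℝ := fun l : S => x i l.1 with hw
    set v : S → ℝ := fun j => θ' j - θstar j with hv
    set u : S → ℝ := (F0)⁻¹ *ᵥ w with hu
    have hFu : F0 *ᵥ u = w := by
      rw [hu, mulVec_mulVec, Matrix.mul_nonsing_inv _ hdet, one_mulVec]
    have hqw : (0:ℝ) ≤ w ⬝ᵥ (F0)⁻¹ *ᵥ w := by
      simpa using hinv.dotProduct_mulVec_nonneg w
    have hΔ : (∑ l : S, x i l.1 * (θ' l - θstar l)) = u ⬝ᵥ F0 *ᵥ v := by
      rw [aux_symm _ hFpd.isHermitian u v, hFu, dotProduct_comm]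
      rfl
    have huu : u ⬝ᵥ F0 *ᵥ u = w ⬝ᵥ (F0)⁻¹ *ᵥ w := by
      rw [hFu, dotProduct_comm]
    have hcs := aux_cs F0 hFpd.posSemidef u v
    rw [huu] at hcs
    have hsq : (∑ l : S, x i l.1 * (θ' l - θstar l)) ^ 2
        ≤ (w ⬝ᵥ (F0)⁻¹ *ᵥ w) * R ^ 2 := by
      rw [hΔ]
      calc (u ⬝ᵥ F0 *ᵥ v) ^ 2 ≤ (w ⬝ᵥ (F0)⁻¹ *ᵥ w) * (v ⬝ᵥ F0 *ᵥ v) := hcs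
        _ ≤ (w ⬝ᵥ (F0)⁻¹ *ᵥ w) * R ^ 2 := mul_le_mul_of_nonneg_left hθ' hqw
    calc |∑ l : S, x i l.1 * (θ' l - θstar l)|
        = Real.sqrt ((∑ l : S, x i l.1 * (θ' l - θstar l)) ^ 2) := (Real.sqrt_sq_eq_abs _).symm
      _ ≤ Real.sqrt ((w ⬝ᵥ (F0)⁻¹ *ᵥ w) * R ^ 2) := Real.sqrt_le_sqrt hsq
      _ = Real.sqrt (w ⬝ᵥ (F0)⁻¹ *ᵥ w) * R := by
          rw [Real.sqrt_mul hqw, Real.sqrt_sq hR.le]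
  -- ζ bounds
  have hζ0 : ∀ i : Fin n,
      Real.sqrt ((fun l : S => x i l.1) ⬝ᵥ (F0)⁻¹ *ᵥ (fun l : S => x i l.1)) ≤ ζ := by
    intro i
    rw [hζ]
    exact le_ciSup (f := fun i : Fin n =>
      Real.sqrt ((fun l : S => x i l.1) ⬝ᵥ (F0)⁻¹ *ᵥ (fun l : S => x i l.1)))
      (Set.Finite.bddAbove (Set.finite_range _)) i
  have hζnn : 0 ≤ ζ := le_trans (Real.sqrt_nonneg _) (hζ0 ⟨0, hn⟩)
  have hΔbound : ∀ (θ' : S → ℝ),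
      (fun j => θ' j - θstar j) ⬝ᵥ F0 *ᵥ (fun j => θ' j - θstar j) ≤ R ^ 2 → ∀ i : Fin n,
      |∑ l : S, x i l.1 * (θ' l - θstar l)| ≤ ζ * R :=
    fun θ' h i => (hCS θ' h i).trans (mul_le_mul_of_nonneg_right (hζ0 i) hR.le)
  -- the supremum M
  set M := (⨆ θ' : {v : S → ℝ //
      (fun j => v j - θstar j) ⬝ᵥ F0 *ᵥ (fun j => v j - θstar j) ≤ R ^ 2},
    ⨆ i : Fin n, Real.exp (3 * |∑ l : S, x i l.1 * (θ'.1 l - θstar l)|)) with hM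
  have hMbdd : BddAbove (Set.range fun θ' : {v : S → ℝ //
      (fun j => v j - θstar j) ⬝ᵥ F0 *ᵥ (fun j => v j - θstar j) ≤ R ^ 2} =>
      ⨆ i : Fin n, Real.exp (3 * |∑ l : S, x i l.1 * (θ'.1 l - θstar l)|)) := by
    refine ⟨Real.exp (3 * (ζ * R)), ?_⟩
    rintro y ⟨θ', rfl⟩
    refine ciSup_le fun i => ?_
    exact Real.exp_le_exp.mpr (by linarith [hΔbound θ'.1 θ'.2 i])
  have hMge : ∀ i : Fin n,
      Real.exp (3 * |∑ l : S, x i l.1 * (θs l - θstar l)|) ≤ M := by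
    intro i
    have step1 : Real.exp (3 * |∑ l : S, x i l.1 * (θs l - θstar l)|)
        ≤ ⨆ i' : Fin n, Real.exp (3 * |∑ l : S, x i' l.1 * (θs l - θstar l)|) :=
      le_ciSup (f := fun i' : Fin n =>
        Real.exp (3 * |∑ l : S, x i' l.1 * (θs l - θstar l)|))
        (Set.Finite.bddAbove (Set.finite_range _)) i
    have step2 := le_ciSup hMbdd (⟨θs, hθ⟩ : {v : S → ℝ //
      (fun j => v j - θstar j) ⬝ᵥ F0 *ᵥ (fun j => v j - θstar j) ≤ R ^ 2})
    exact step1.trans step2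
  -- the scalar bound
  have hscalar : ∀ i : Fin n,
      |g (∑ l : S, x i l.1 * θs l) - g (∑ l : S, x i l.1 * θstar l)|
        ≤ δ * g (∑ l : S, x i l.1 * θstar l) := by
    intro i
    set η0 := ∑ l : S, x i l.1 * θstar l with hη0
    set Δi := ∑ l : S, x i l.1 * (θs l - θstar l) with hΔi
    have hsum : (∑ l : S, x i l.1 * θs l) = η0 + Δi := by
      rw [hη0, hΔi, ← Finset.sum_add_distrib]
      exact Finset.sum_congr rfl fun l _ => by ring
    have hm := aux_mvt b hb3 hbpos hb3bound hbratio η0 Δi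
    rw [← hsum] at hm
    have h1 : |Δi| ≤ ζ * R := hΔbound θs hθ i
    have h2 : Real.exp (3 * |Δi|) ≤ M := hMge i
    have h3 : |Δi| * Real.exp (3 * |Δi|) ≤ δ := by
      have := mul_le_mul h1 h2 (Real.exp_pos _).le (by positivity)
      rw [hδ]
      calc |Δi| * Real.exp (3 * |Δi|) ≤ ζ * R * M := this
        _ = M * ζ * R := by ring
    calc |g (∑ l : S, x i l.1 * θs l) - g η0|
        ≤ |Δi| * Real.exp (3 * |Δi|) * g η0 := hm
      _ ≤ δ * g η0 := mul_le_mul_of_nonneg_right h3 (hbpos η0).le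
  -- assemble
  constructor
  · refine aux_psd (fun i => g (∑ l : S, x i l.1 * θs l)
        - (1 - δ) * g (∑ l : S, x i l.1 * θstar l)) (fun i => ?_)
      (fun i (j : S) => x i j.1) _ (fun j k => ?_)
    · have := abs_le.mp (hscalar i)
      have hp := hbpos (∑ l : S, x i l.1 * θstar l)
      nlinarith [this.1]
    · simp only [Matrix.sub_apply, Matrix.smul_apply, smul_eq_mul, hFdef, hF0, Finset.mul_sum,
        ← Finset.sum_sub_distrib]
      exact Finset.sum_congr rfl fun i _ => by ring
  · refine aux_psd (fun i => (1 + δ) * g (∑ l : S, x i l.1 * θstar l)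
        - g (∑ l : S, x i l.1 * θs l)) (fun i => ?_)
      (fun i (j : S) => x i j.1) _ (fun j k => ?_)
    · have := abs_le.mp (hscalar i)
      have hp := hbpos (∑ l : S, x i l.1 * θstar l)
      nlinarith [this.2]
    · simp only [Matrix.sub_apply, Matrix.smul_apply, smul_eq_mul, hFdef, hF0, Finset.mul_sum,
        ← Finset.sum_sub_distrib]
      exact Finset.sum_congr rfl fun i _ => by ring
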